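/- With G = J − J W S⊥ (S⊥' W S⊥)^{-1} S⊥' (the alternative MinT formula), the bottom-level reconciled forecast satisfies G ŷ = ŷ^{bot} − J W S⊥ (S⊥' W S⊥)^{-1} (ŷ^{top} − C ŷ^{bot}); i.e., it modifies the bottom-level base forecasts only through the incoherency term ŷ^{top} − C ŷ^{bot}. In particular, if ŷ is coherent (ŷ^{top} = C ŷ^{bot}) then G ŷ = ŷ^{bot} and S G ŷ = ŷ. -/

import Mathlib

open Matrix

/-- With the alternative MinT formula `G = J − J W S⊥ (S⊥ᵀ W S⊥)⁻¹ S⊥ᵀ`, the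
bottom-level reconciled forecast is
`G ŷ = ŷᵇᵒᵗ − J W S⊥ (S⊥ᵀ W S⊥)⁻¹ (ŷᵗᵒᵖ − C ŷᵇᵒᵗ)`, i.e. it modifies the bottom
base forecasts only through the incoherency; in particular if `ŷ` is coherent
(`ŷᵗᵒᵖ = C ŷᵇᵒᵗ`) then `G ŷ = ŷᵇᵒᵗ` and `S G ŷ = ŷ`. -/
theorem mint_alternative_formula {q n : ℕ}
    (C : Matrix (Fin q) (Fin n) ℝ)
    (W : Matrix (Fin q ⊕ Fin n) (Fin q ⊕ Fin n) ℝ) (hW : W.PosDef)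
    (S : Matrix (Fin q ⊕ Fin n) (Fin n) ℝ) (hS : S = Matrix.fromRows C 1)
    (J : Matrix (Fin n) (Fin q ⊕ Fin n) ℝ) (hJ : J = Matrix.fromCols 0 1)
    (Sperp : Matrix (Fin q ⊕ Fin n) (Fin q) ℝ)
    (hSperp : Sperpᵀ = Matrix.fromCols 1 (-C))
    (G : Matrix (Fin n) (Fin q ⊕ Fin n) ℝ)
    (hG : G = J - J * W * Sperp * (Sperpᵀ * W * Sperp)⁻¹ * Sperpᵀ) :
    (∀ yhat : Fin q ⊕ Fin n → ℝ,
      G.mulVec yhat =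
        (fun i => yhat (Sum.inr i)) -
          (J * W * Sperp * (Sperpᵀ * W * Sperp)⁻¹).mulVec
            (fun i => yhat (Sum.inl i) - C.mulVec (fun j => yhat (Sum.inr j)) i)) ∧
    (∀ yhat : Fin q ⊕ Fin n → ℝ,
      (∀ i, yhat (Sum.inl i) = C.mulVec (fun j => yhat (Sum.inr j)) i) →
        G.mulVec yhat = (fun i => yhat (Sum.inr i)) ∧
          (S * G).mulVec yhat = yhat) := by
  have hsplit : ∀ y : Fin q ⊕ Fin n → ℝ,
      y = Sum.elim (fun i => y (Sum.inl i)) (fun i => y (Sum.inr i)) := by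
    intro y; funext x; cases x <;> rfl
  have hJv : ∀ y : Fin q ⊕ Fin n → ℝ, J.mulVec y = fun i => y (Sum.inr i) := by
    intro y
    conv_lhs => rw [hJ, hsplit y]
    rw [Matrix.fromCols_mulVec_sumElim]
    simp
  have hSv : ∀ y : Fin q ⊕ Fin n → ℝ,
      Sperpᵀ.mulVec y =
        fun i => y (Sum.inl i) - C.mulVec (fun j => y (Sum.inr j)) i := by
    intro y
    conv_lhs => rw [hSperp, hsplit y]
    rw [Matrix.fromCols_mulVec_sumElim]
    funext i
    simp [Matrix.neg_mulVec, sub_eq_add_neg]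
  have main : ∀ yhat : Fin q ⊕ Fin n → ℝ,
      G.mulVec yhat =
        (fun i => yhat (Sum.inr i)) -
          (J * W * Sperp * (Sperpᵀ * W * Sperp)⁻¹).mulVec
            (fun i => yhat (Sum.inl i) - C.mulVec (fun j => yhat (Sum.inr j)) i) := by
    intro y
    rw [hG, Matrix.sub_mulVec, hJv, ← Matrix.mulVec_mulVec, hSv]
  refine ⟨main, ?_⟩
  intro y hcoh
  have hzero : (fun i => y (Sum.inl i) - C.mulVec (fun j => y (Sum.inr j)) i)
      = (0 : Fin q → ℝ) := by
    funext i; simp [hcoh i]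
  have hGy : G.mulVec y = fun i => y (Sum.inr i) := by
    rw [main y, hzero, Matrix.mulVec_zero, sub_zero]
  refine ⟨hGy, ?_⟩
  rw [← Matrix.mulVec_mulVec, hGy, hS, Matrix.fromRows_mulVec]
  funext x
  cases x with
  | inl i => simp [hcoh i]
  | inr i => simp
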